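/- The function w ↦ Li₂(−e^w) is holomorphic on the horizontal strip {w ∈ ℂ : |Im w| < π}, and its derivative there equals −Log(1 + e^w). -/

import Mathlib

open Real

/-- The dilogarithm `Li₂(z) = -∫₀¹ Log(1 - z t) / t dt`. -/
noncomputable def Li2 (z : ℂ) : ℂ :=
  -∫ t in (0:ℝ)..(1:ℝ), Complex.log (1 - z * (t : ℂ)) / (t : ℂ)

lemma mem_slit {w : ℂ} (hw : |w.im| < π) {t : ℝ} (ht : 0 ≤ t) :
    1 + Complex.exp w * (t : ℂ) ∈ Complex.slitPlane := by
  rw [Complex.mem_slitPlane_iff]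
  rcases eq_or_ne w.im 0 with h0 | h0
  · left
    simp only [Complex.add_re, Complex.one_re, Complex.mul_re, Complex.exp_re, Complex.exp_im,
      Complex.ofReal_re, Complex.ofReal_im, h0, Real.cos_zero, Real.sin_zero, mul_zero, mul_one,
      zero_mul, sub_zero]
    positivity
  · rcases ht.eq_or_lt with rfl | ht'
    · left; simp
    · right
      have hs : Real.sin w.im ≠ 0 := by
        intro h
        exact h0 ((Real.sin_eq_zero_iff_of_lt_of_lt (by linarith [abs_lt.mp hw])
          (by linarith [abs_lt.mp hw])).mp h)
      simp only [Complex.add_im, Complex.one_im, Complex.mul_im, Complex.exp_re, Complex.exp_im,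
        Complex.ofReal_re, Complex.ofReal_im, mul_zero, add_zero, zero_add]
      positivity

lemma hasDerivAt_w {x : ℂ} (hx : |x.im| < π) {t : ℝ} (ht : 0 ≤ t) (htne : t ≠ 0) :
    HasDerivAt (fun x : ℂ => Complex.log (1 + Complex.exp x * (t : ℂ)) / (t : ℂ))
      (Complex.exp x / (1 + Complex.exp x * (t : ℂ))) x := by
  have h1 : HasDerivAt (fun x : ℂ => 1 + Complex.exp x * (t : ℂ)) (Complex.exp x * t) x :=
    ((Complex.hasDerivAt_exp x).mul_const _).const_add 1
  have hslit := mem_slit hx ht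
  have h2 := ((Complex.hasDerivAt_log hslit).comp x h1).div_const (t : ℂ)
  refine h2.congr_deriv ?_
  have hne := Complex.slitPlane_ne_zero hslit
  have htc : (t : ℂ) ≠ 0 := Complex.ofReal_ne_zero.mpr htne
  rw [mul_div_assoc, mul_div_cancel_right₀ _ htc]
  ring

lemma hasDerivAt_t {w : ℂ} (hw : |w.im| < π) {s : ℝ} (hs : 0 ≤ s) :
    HasDerivAt (fun t : ℝ => Complex.log (1 + Complex.exp w * (t : ℂ)))
      (Complex.exp w / (1 + Complex.exp w * (s : ℂ))) s := by
  have h1 : HasDerivAt (fun z : ℂ => 1 + Complex.exp w * z) (Complex.exp w) (s : ℂ) := by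
    simpa using ((hasDerivAt_id (s : ℂ)).const_mul (Complex.exp w)).const_add 1
  have h2 := (Complex.hasDerivAt_log (mem_slit hw hs)).comp (s : ℂ) h1
  have h3 := h2.comp_ofReal
  convert h3 using 1
  · rfl
  rw [inv_mul_eq_div]

theorem stmt_2 :
    DifferentiableOn ℂ (fun w : ℂ => Li2 (-Complex.exp w)) {w : ℂ | |w.im| < π} ∧
    ∀ w : ℂ, |w.im| < π →
      HasDerivAt (fun w : ℂ => Li2 (-Complex.exp w))
        (-Complex.log (1 + Complex.exp w)) w := by
  have key : ∀ w : ℂ, |w.im| < π →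
      HasDerivAt (fun w : ℂ => Li2 (-Complex.exp w))
        (-Complex.log (1 + Complex.exp w)) w := by
    intro w₀ hw₀
    have hfun : (fun w : ℂ => Li2 (-Complex.exp w)) =
        fun w : ℂ => -∫ t in (0:ℝ)..(1:ℝ),
          Complex.log (1 + Complex.exp w * (t : ℂ)) / (t : ℂ) := by
      funext w
      simp only [Li2, neg_mul, sub_neg_eq_add]
    rw [hfun]
    have hopen : IsOpen {w : ℂ | |w.im| < π} :=
      isOpen_lt (continuous_abs.comp Complex.continuous_im) continuous_const
    obtain ⟨ε, hε, hball⟩ := Metric.nhds_basis_closedBall.mem_iff.mp (hopen.mem_nhds hw₀)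
    set F : ℂ → ℝ → ℂ :=
      fun x t => Complex.log (1 + Complex.exp x * (t : ℂ)) / (t : ℂ) with hF
    set F' : ℂ → ℝ → ℂ :=
      fun x t => Complex.exp x / (1 + Complex.exp x * (t : ℂ)) with hF'
    have hIoc : Set.uIoc (0:ℝ) 1 = Set.Ioc 0 1 := Set.uIoc_of_le zero_le_one
    -- continuity in t of F x, for x in the strip
    have hFcont : ∀ x : ℂ, |x.im| < π → ContinuousOn (F x) (Set.Ioc 0 1) := by
      intro x hx
      apply ContinuousOn.div
      · apply ContinuousOn.clog
        · fun_prop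
        · exact fun t ht => mem_slit hx ht.1.le
      · fun_prop
      · exact fun t ht => Complex.ofReal_ne_zero.mpr (ne_of_gt ht.1)
    have hF'cont : ∀ x : ℂ, |x.im| < π → ContinuousOn (F' x) (Set.Icc 0 1) := by
      intro x hx
      apply ContinuousOn.div continuousOn_const
      · fun_prop
      · exact fun t ht => Complex.slitPlane_ne_zero (mem_slit hx ht.1)
    have hF_meas : ∀ᶠ x in nhds w₀,
        MeasureTheory.AEStronglyMeasurable (F x)
          (MeasureTheory.volume.restrict (Set.uIoc (0:ℝ) 1)) := by
      filter_upwards [hopen.mem_nhds hw₀] with x hx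
      rw [hIoc]
      exact (hFcont x hx).aestronglyMeasurable measurableSet_Ioc
    -- integrability of F w₀ via mean value bound
    have hF_int : IntervalIntegrable (F w₀) MeasureTheory.volume 0 1 := by
      obtain ⟨C, hC⟩ := isCompact_Icc.exists_bound_of_continuousOn (hF'cont w₀ hw₀)
      have hmvt : ∀ t ∈ Set.Icc (0:ℝ) 1,
          ‖Complex.log (1 + Complex.exp w₀ * (t : ℂ))‖ ≤ C * t := by
        intro t ht
        have := Convex.norm_image_sub_le_of_norm_hasDerivWithin_le
          (f := fun t : ℝ => Complex.log (1 + Complex.exp w₀ * (t : ℂ)))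
          (f' := F' w₀) (C := C) (s := Set.Icc (0:ℝ) 1)
          (fun s hs => (hasDerivAt_t hw₀ hs.1).hasDerivWithinAt)
          (fun s hs => hC s hs) (convex_Icc 0 1) ⟨le_refl 0, zero_le_one⟩ ht
        simpa [Real.norm_eq_abs, abs_of_nonneg ht.1] using this
      rw [intervalIntegrable_iff_integrableOn_Ioc_of_le zero_le_one]
      apply MeasureTheory.Integrable.mono' (MeasureTheory.integrable_const C)
      · exact (hFcont w₀ hw₀).aestronglyMeasurable measurableSet_Ioc
      · rw [MeasureTheory.ae_restrict_iff' measurableSet_Ioc]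
        filter_upwards with t ht
        have ht0 : (0:ℝ) < t := ht.1
        have : ‖F w₀ t‖ = ‖Complex.log (1 + Complex.exp w₀ * (t : ℂ))‖ / t := by
          simp [hF, norm_div, Complex.norm_real, Real.norm_eq_abs, abs_of_pos ht0]
        rw [this, div_le_iff₀ ht0]
        exact hmvt t ⟨ht0.le, ht.2⟩
    have hF'_meas : MeasureTheory.AEStronglyMeasurable (F' w₀)
        (MeasureTheory.volume.restrict (Set.uIoc (0:ℝ) 1)) := by
      rw [hIoc]
      exact ((hF'cont w₀ hw₀).mono Set.Ioc_subset_Icc_self).aestronglyMeasurable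
        measurableSet_Ioc
    -- uniform bound on the derivative
    obtain ⟨C₂, hC₂⟩ := ((isCompact_closedBall w₀ ε).prod isCompact_Icc).exists_bound_of_continuousOn
      (f := fun p : ℂ × ℝ => Complex.exp p.1 / (1 + Complex.exp p.1 * (p.2 : ℂ)))
      (by
        apply ContinuousOn.div
        · fun_prop
        · fun_prop
        · rintro ⟨x, t⟩ ⟨hx, ht⟩
          exact Complex.slitPlane_ne_zero (mem_slit (hball hx) ht.1))
    have h_bound : ∀ᵐ t ∂MeasureTheory.volume, t ∈ Set.uIoc (0:ℝ) 1 →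
        ∀ x ∈ Metric.ball w₀ ε, ‖F' x t‖ ≤ C₂ := by
      filter_upwards with t ht x hx
      rw [hIoc] at ht
      exact hC₂ (x, t) ⟨Metric.ball_subset_closedBall hx, ⟨ht.1.le, ht.2⟩⟩
    have h_diff : ∀ᵐ t ∂MeasureTheory.volume, t ∈ Set.uIoc (0:ℝ) 1 →
        ∀ x ∈ Metric.ball w₀ ε, HasDerivAt (fun x => F x t) (F' x t) x := by
      filter_upwards with t ht x hx
      rw [hIoc] at ht
      exact hasDerivAt_w (hball (Metric.ball_subset_closedBall hx)) ht.1.le (ne_of_gt ht.1)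
    obtain ⟨-, hder⟩ := intervalIntegral.hasDerivAt_integral_of_dominated_loc_of_deriv_le
      (Metric.ball_mem_nhds w₀ hε) hF_meas hF_int hF'_meas h_bound (intervalIntegrable_const) h_diff
    have hval : (∫ t in (0:ℝ)..(1:ℝ), F' w₀ t) = Complex.log (1 + Complex.exp w₀) := by
      have hint : IntervalIntegrable (F' w₀) MeasureTheory.volume 0 1 :=
        ((hF'cont w₀ hw₀).mono (by rw [Set.uIcc_of_le zero_le_one])).intervalIntegrable
      have := intervalIntegral.integral_eq_sub_of_hasDerivAt
        (f := fun t : ℝ => Complex.log (1 + Complex.exp w₀ * (t : ℂ)))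
        (f' := F' w₀)
        (fun t ht => hasDerivAt_t hw₀ (by
          rw [Set.uIcc_of_le zero_le_one] at ht; exact ht.1)) hint
      rw [this]
      simp
    rw [hval] at hder
    exact hder.neg
  exact ⟨fun w hw => (key w hw).differentiableAt.differentiableWithinAt, key⟩
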